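/- arXiv:1103.6065 — 7 statements merged into one kernel-verified Lean document; each statement's English description precedes it below -/
import Mathlib

section
/- Let Y, A, B be real Banach spaces and let α : Y → A and β : Y → B be bounded linear operators with α an isometric embedding (‖α(y)‖ = ‖y‖ for all y) and ‖β‖ ≤ 1. Then the canonical map α' : B → PO(α,β) into the push-out, given by α'(b) = (0,b) + Δ, is an isometric embedding; equivalently, for every b ∈ B one has inf_{y ∈ Y} ( ‖α(y)‖ + ‖b − β(y)‖ ) = ‖b‖. -/
open scoped ENNReal

variable (Y A B : Type*)
  [NormedAddCommGroup Y] [NormedSpace ℝ Y] [CompleteSpace Y]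
  [NormedAddCommGroup A] [NormedSpace ℝ A] [CompleteSpace A]
  [NormedAddCommGroup B] [NormedSpace ℝ B] [CompleteSpace B]

/-- The subspace `Δ = {(α y, -β y) : y ∈ Y}` inside `A ⊕₁ B`. -/
noncomputable def pushoutDelta (α : Y →L[ℝ] A) (β : Y →L[ℝ] B) :
    Submodule ℝ (WithLp 1 (A × B)) :=
  LinearMap.range ((WithLp.linearEquiv 1 ℝ (A × B)).symm.toLinearMap ∘ₗ
    LinearMap.prod (α : Y →ₗ[ℝ] A) (-(β : Y →ₗ[ℝ] B)))

/-- The push-out `PO(α,β) = (A ⊕₁ B)/cl(Δ)` with the quotient norm. -/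
noncomputable def pushout (α : Y →L[ℝ] A) (β : Y →L[ℝ] B) : Type _ :=
  WithLp 1 (A × B) ⧸ (pushoutDelta Y A B α β).topologicalClosure

noncomputable instance (α : Y →L[ℝ] A) (β : Y →L[ℝ] B) :
    NormedAddCommGroup (pushout Y A B α β) :=
  @Submodule.Quotient.normedAddCommGroup _ _ _ _ _
    (pushoutDelta Y A B α β).topologicalClosure
    (Submodule.isClosed_topologicalClosure _)

noncomputable instance (α : Y →L[ℝ] A) (β : Y →L[ℝ] B) :
    NormedSpace ℝ (pushout Y A B α β) :=
  Submodule.Quotient.normedSpace _ ℝ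

/-- The canonical map `α' : B → PO(α,β)`, `b ↦ (0,b) + cl(Δ)`. -/
noncomputable def pushoutInr (α : Y →L[ℝ] A) (β : Y →L[ℝ] B) :
    B →ₗ[ℝ] pushout Y A B α β :=
  ((pushoutDelta Y A B α β).topologicalClosure.mkQ) ∘ₗ
    (WithLp.linearEquiv 1 ℝ (A × B)).symm.toLinearMap ∘ₗ LinearMap.inr ℝ A B

private lemma wlp_norm (C D : Type*) [NormedAddCommGroup C] [NormedAddCommGroup D]
    [NormedSpace ℝ C] [NormedSpace ℝ D] (a : C) (b : D) :
    ‖(WithLp.linearEquiv 1 ℝ (C × D)).symm (a, b)‖ = ‖a‖ + ‖b‖ := by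
  rw [WithLp.prod_norm_eq_add (by norm_num)]
  simp

/-- If `α` is an isometric embedding and `‖β‖ ≤ 1`, then the canonical map
`α' : B → PO(α,β)` is an isometric embedding; equivalently,
`inf_{y ∈ Y} (‖α y‖ + ‖b − β y‖) = ‖b‖` for every `b ∈ B`. -/
theorem pushoutInr_isometry (α : Y →L[ℝ] A) (β : Y →L[ℝ] B)
    (hα : ∀ y : Y, ‖α y‖ = ‖y‖) (hβ : ‖β‖ ≤ 1) :
    (∀ b : B, ‖pushoutInr Y A B α β b‖ = ‖b‖) ∧
      (∀ b : B, (⨅ y : Y, (‖α y‖ + ‖b - β y‖)) = ‖b‖) := by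
  have key : ∀ b : B, ∀ y : Y, ‖b‖ ≤ ‖α y‖ + ‖b - β y‖ := by
    intro b y
    have h1 : ‖β y‖ ≤ ‖y‖ := by
      calc ‖β y‖ ≤ ‖β‖ * ‖y‖ := β.le_opNorm y
        _ ≤ 1 * ‖y‖ := mul_le_mul_of_nonneg_right hβ (norm_nonneg y)
        _ = ‖y‖ := one_mul _
    have h2 : ‖b‖ - ‖β y‖ ≤ ‖b - β y‖ := norm_sub_norm_le b (β y)
    rw [hα]
    linarith
  constructor
  · intro b
    set e := (WithLp.linearEquiv 1 ℝ (A × B)).symm with he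
    set m : WithLp 1 (A × B) := e (0, b) with hm
    have hmn : ‖m‖ = ‖b‖ := by rw [hm, wlp_norm]; simp
    have hval : pushoutInr Y A B α β b = Submodule.Quotient.mk m := rfl
    apply le_antisymm
    · rw [hval, ← hmn]
      exact Submodule.Quotient.norm_mk_le _ m
    · rw [hval]
      have hnm : ‖(Submodule.Quotient.mk m :
          WithLp 1 (A × B) ⧸ (pushoutDelta Y A B α β).topologicalClosure)‖
          = Metric.infDist m ((pushoutDelta Y A B α β).topologicalClosure : Set _) :=
        QuotientAddGroup.norm_mk m
      refine le_of_le_of_eq ?_ hnm.symm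
      have hC : IsClosed {v : WithLp 1 (A × B) | ‖b‖ ≤ ‖m - v‖} := by
        have : Continuous fun v : WithLp 1 (A × B) => ‖m - v‖ :=
          (continuous_const.sub continuous_id).norm
        exact isClosed_le continuous_const this
      have hΔC : (pushoutDelta Y A B α β : Set (WithLp 1 (A × B))) ⊆
          {v | ‖b‖ ≤ ‖m - v‖} := by
        rintro v ⟨y, rfl⟩
        have hv : m - ((WithLp.linearEquiv 1 ℝ (A × B)).symm.toLinearMap ∘ₗ
            LinearMap.prod (α : Y →ₗ[ℝ] A) (-(β : Y →ₗ[ℝ] B))) y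
            = e (-(α y), b + β y) := by
          simp only [hm, he, LinearMap.comp_apply, LinearMap.prod_apply,
            LinearEquiv.coe_coe, Pi.prod, LinearMap.neg_apply,
            ContinuousLinearMap.coe_coe, ← map_sub]
          congr 1
          simp [Prod.ext_iff, sub_eq_add_neg]
        rw [Set.mem_setOf_eq, hv, wlp_norm]
        have := key b (-y)
        simp only [map_neg, norm_neg, sub_neg_eq_add] at this ⊢
        exact this
      have hclΔ : ((pushoutDelta Y A B α β).topologicalClosure :
          Set (WithLp 1 (A × B))) ⊆ {v | ‖b‖ ≤ ‖m - v‖} := by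
        rw [Submodule.topologicalClosure_coe]
        exact closure_minimal hΔC hC
      rw [Metric.infDist_eq_iInf]
      have : Nonempty ((pushoutDelta Y A B α β).topologicalClosure :
          Set (WithLp 1 (A × B))) := ⟨⟨0, Submodule.zero_mem _⟩⟩
      refine le_ciInf fun z => ?_
      rw [dist_eq_norm]
      exact hclΔ z.2
  · intro b
    apply le_antisymm
    · have hb : BddBelow (Set.range fun y : Y => ‖α y‖ + ‖b - β y‖) :=
        ⟨0, by rintro x ⟨y, rfl⟩; positivity⟩
      calc (⨅ y : Y, (‖α y‖ + ‖b - β y‖)) ≤ ‖α 0‖ + ‖b - β 0‖ := ciInf_le hb 0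
        _ = ‖b‖ := by simp
    · exact le_ciInf (key b)
end

section
/- Let Y, A, B be real Banach spaces and let α : Y → A and β : Y → B be bounded linear operators such that ‖β‖ ≤ 1 and α is an isomorphism (a bijective bounded linear map with bounded inverse). Then the canonical map α' : B → PO(α,β) is an isomorphism of B onto the push-out PO(α,β), and ‖(α')⁻¹‖ ≤ max{1, ‖α⁻¹‖}. -/
open scoped ENNReal

variable (Y A B : Type*)
  [NormedAddCommGroup Y] [NormedSpace ℝ Y] [CompleteSpace Y]
  [NormedAddCommGroup A] [NormedSpace ℝ A] [CompleteSpace A]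
  [NormedAddCommGroup B] [NormedSpace ℝ B] [CompleteSpace B]

noncomputable instance (α : Y →L[ℝ] A) (β : Y →L[ℝ] B) :
    CompleteSpace (pushout Y A B α β) :=
  Submodule.Quotient.completeSpace _

/-- If `‖β‖ ≤ 1` and `α` is an isomorphism, then the canonical map
`α' : B → PO(α,β)` is an isomorphism onto the push-out, with
`‖(α')⁻¹‖ ≤ max {1, ‖α⁻¹‖}`. -/
theorem pushoutInr_isomorphism (α : Y ≃L[ℝ] A) (β : Y →L[ℝ] B) (hβ : ‖β‖ ≤ 1) :
    ∃ e : B ≃L[ℝ] pushout Y A B (α : Y →L[ℝ] A) β,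
      (∀ b : B, e b = pushoutInr Y A B (α : Y →L[ℝ] A) β b) ∧
        ‖(e.symm : pushout Y A B (α : Y →L[ℝ] A) β →L[ℝ] B)‖ ≤
          max 1 ‖(α.symm : A →L[ℝ] Y)‖ := by
  classical
  set C : ℝ := max 1 ‖(α.symm : A →L[ℝ] Y)‖ with hC
  have hC0 : 0 ≤ C := le_trans zero_le_one (le_max_left _ _)
  -- the map S : A ⊕₁ B → B, (a,b) ↦ β (α⁻¹ a) + b
  set S : WithLp 1 (A × B) →L[ℝ] B :=
    (((β.comp (α.symm : A →L[ℝ] Y)).comp (ContinuousLinearMap.fst ℝ A B) +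
        ContinuousLinearMap.snd ℝ A B).comp
      (WithLp.prodContinuousLinearEquiv 1 ℝ A B : WithLp 1 (A × B) →L[ℝ] A × B)) with hS
  have hSapp : ∀ x : WithLp 1 (A × B),
      S x = β (α.symm (WithLp.prodContinuousLinearEquiv 1 ℝ A B x).1) +
        (WithLp.prodContinuousLinearEquiv 1 ℝ A B x).2 := fun x => rfl
  have hnorm : ∀ x : WithLp 1 (A × B),
      ‖x‖ = ‖(WithLp.prodContinuousLinearEquiv 1 ℝ A B x).1‖ +
        ‖(WithLp.prodContinuousLinearEquiv 1 ℝ A B x).2‖ := by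
    intro x
    have := WithLp.prod_norm_eq_add (p := 1) (by norm_num) x
    simpa using this
  have hSbound : ∀ x : WithLp 1 (A × B), ‖S x‖ ≤ C * ‖x‖ := by
    intro x
    set a := (WithLp.prodContinuousLinearEquiv 1 ℝ A B x).1
    set b := (WithLp.prodContinuousLinearEquiv 1 ℝ A B x).2
    have h1 : ‖β (α.symm a)‖ ≤ ‖(α.symm : A →L[ℝ] Y)‖ * ‖a‖ := by
      calc ‖β (α.symm a)‖ ≤ ‖β‖ * ‖α.symm a‖ := β.le_opNorm _
        _ ≤ 1 * ‖α.symm a‖ := by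
            exact mul_le_mul_of_nonneg_right hβ (norm_nonneg _)
        _ = ‖α.symm a‖ := one_mul _
        _ ≤ ‖(α.symm : A →L[ℝ] Y)‖ * ‖a‖ := (α.symm : A →L[ℝ] Y).le_opNorm _
    calc ‖S x‖ ≤ ‖β (α.symm a)‖ + ‖b‖ := by rw [hSapp]; exact norm_add_le _ _
      _ ≤ ‖(α.symm : A →L[ℝ] Y)‖ * ‖a‖ + 1 * ‖b‖ := by
          rw [one_mul]; exact add_le_add h1 le_rfl
      _ ≤ C * ‖a‖ + C * ‖b‖ := by
          gcongr
          · exact le_max_right _ _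
          · exact le_max_left _ _
      _ = C * ‖x‖ := by rw [hnorm x, mul_add]
  -- Δ's closure is contained in ker S
  have hker : (pushoutDelta Y A B (α : Y →L[ℝ] A) β).topologicalClosure ≤
      LinearMap.ker (S : WithLp 1 (A × B) →ₗ[ℝ] B) := by
    apply Submodule.topologicalClosure_minimal
    · rintro x ⟨y, rfl⟩
      simp only [LinearMap.mem_ker, LinearMap.comp_apply]
      rw [ContinuousLinearMap.coe_coe, hSapp]
      show β (α.symm (α y)) + (-β y) = 0
      simp
    · exact ContinuousLinearMap.isClosed_ker S
  -- the induced map on the quotient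
  set Tlin : pushout Y A B (α : Y →L[ℝ] A) β →ₗ[ℝ] B :=
    (pushoutDelta Y A B (α : Y →L[ℝ] A) β).topologicalClosure.liftQ
      (S : WithLp 1 (A × B) →ₗ[ℝ] B) hker with hT
  have hTmk : ∀ x : WithLp 1 (A × B), Tlin (Submodule.Quotient.mk x) = S x := fun x => rfl
  have hTbound : ∀ q : pushout Y A B (α : Y →L[ℝ] A) β, ‖Tlin q‖ ≤ C * ‖q‖ := by
    intro q
    refine le_of_forall_pos_le_add fun ε hε => ?_
    have hδ : 0 < ε / (C + 1) := by positivity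
    obtain ⟨x, hx, hxn⟩ := Submodule.Quotient.norm_mk_lt q hδ
    calc ‖Tlin q‖ = ‖S x‖ := by rw [← hx, hTmk]
      _ ≤ C * ‖x‖ := hSbound x
      _ ≤ C * (‖q‖ + ε / (C + 1)) := mul_le_mul_of_nonneg_left hxn.le hC0
      _ = C * ‖q‖ + C * (ε / (C + 1)) := by ring
      _ ≤ C * ‖q‖ + ε := by
          gcongr
          rw [div_eq_inv_mul, ← mul_assoc]
          calc C * (C + 1)⁻¹ * ε ≤ 1 * ε := by
                gcongr
                rw [mul_inv_le_iff₀ (by positivity), one_mul]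
                linarith
            _ = ε := one_mul ε
  set T : pushout Y A B (α : Y →L[ℝ] A) β →L[ℝ] B :=
    Tlin.mkContinuous C hTbound with hTc
  set f : B →L[ℝ] pushout Y A B (α : Y →L[ℝ] A) β :=
    (pushoutInr Y A B (α : Y →L[ℝ] A) β).mkContinuous 1 (fun b => by
      rw [one_mul]
      calc ‖pushoutInr Y A B (α : Y →L[ℝ] A) β b‖
          ≤ ‖(WithLp.linearEquiv 1 ℝ (A × B)).symm (0, b)‖ :=
            Submodule.Quotient.norm_mk_le _ _
        _ = ‖b‖ := by
            rw [hnorm]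
            show ‖(0 : A)‖ + ‖b‖ = ‖b‖
            simp) with hf
  have h₁ : Function.LeftInverse T f := by
    intro b
    show Tlin (pushoutInr Y A B (α : Y →L[ℝ] A) β b) = b
    rw [show pushoutInr Y A B (α : Y →L[ℝ] A) β b =
        Submodule.Quotient.mk ((WithLp.linearEquiv 1 ℝ (A × B)).symm (0, b)) from rfl, hTmk,
      hSapp]
    show β (α.symm 0) + b = b
    simp
  have h₂ : Function.RightInverse T f := by
    intro q
    obtain ⟨x, rfl⟩ := Submodule.Quotient.mk_surjective _ q
    show pushoutInr Y A B (α : Y →L[ℝ] A) β (S x) = Submodule.Quotient.mk x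
    rw [show pushoutInr Y A B (α : Y →L[ℝ] A) β (S x) =
        Submodule.Quotient.mk ((WithLp.linearEquiv 1 ℝ (A × B)).symm (0, S x)) from rfl]
    apply (Submodule.Quotient.eq _).mpr
    apply Submodule.le_topologicalClosure
    refine ⟨-(α.symm ((WithLp.prodContinuousLinearEquiv 1 ℝ A B) x).1), ?_⟩
    apply (WithLp.prodContinuousLinearEquiv 1 ℝ A B).injective
    refine Prod.ext ?_ ?_
    · show α (-(α.symm ((WithLp.prodContinuousLinearEquiv 1 ℝ A B) x).1)) =
        0 - ((WithLp.prodContinuousLinearEquiv 1 ℝ A B) x).1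
      simp
    · show -(β (-(α.symm ((WithLp.prodContinuousLinearEquiv 1 ℝ A B) x).1))) =
        (β (α.symm ((WithLp.prodContinuousLinearEquiv 1 ℝ A B) x).1) +
          ((WithLp.prodContinuousLinearEquiv 1 ℝ A B) x).2) -
          ((WithLp.prodContinuousLinearEquiv 1 ℝ A B) x).2
      simp
  refine ⟨ContinuousLinearEquiv.equivOfInverse f T h₁ h₂, fun b => rfl, ?_⟩
  rw [ContinuousLinearEquiv.symm_equivOfInverse]
  exact ContinuousLinearMap.opNorm_le_bound _ hC0 hTbound
end

section
/- If U is a real Banach space of universal disposition for separable spaces, then every dense subset of U has cardinality at least the continuum 𝔠; that is, the density character of U is at least 𝔠. -/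
open Cardinal

/-- A real Banach space `U` is of universal disposition for separable spaces if for every
pair of separable real Banach spaces `A` and `B`, every linear isometric embedding
`u : A → U` and every linear isometric embedding `j : A → B`, there is a linear isometric
embedding `u' : B → U` with `u' ∘ j = u`. -/
def UnivDispSeparable (U : Type*) [NormedAddCommGroup U] [NormedSpace ℝ U] : Prop :=
  ∀ (A B : Type) [NormedAddCommGroup A] [NormedSpace ℝ A] [CompleteSpace A]
    [TopologicalSpace.SeparableSpace A]
    [NormedAddCommGroup B] [NormedSpace ℝ B] [CompleteSpace B]
    [TopologicalSpace.SeparableSpace B]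
    (u : A →ₗᵢ[ℝ] U) (j : A →ₗᵢ[ℝ] B),
    ∃ u' : B →ₗᵢ[ℝ] U, ∀ a : A, u' (j a) = u a

noncomputable section UDaux

/-- The space ℓ∞ of bounded real sequences. -/
abbrev UDlinf : Type := lp (fun _ : ℕ => ℝ) ⊤

/-- Indicator of a set of naturals, as an element of ℓ∞. -/
def UDind (S : Set ℕ) : UDlinf :=
  ⟨S.indicator 1, memℓp_infty ⟨1, by
    rintro r ⟨i, rfl⟩
    by_cases h : i ∈ S <;> simp [Set.indicator, h]⟩⟩

lemma UDind_apply (S : Set ℕ) (i : ℕ) : (UDind S : ∀ _ : ℕ, ℝ) i = S.indicator 1 i := rfl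

lemma UDnorm_eq (f : UDlinf) (c : ℝ) (h1 : ∀ i, ‖(f : ∀ _ : ℕ, ℝ) i‖ ≤ c) (n : ℕ)
    (h2 : ‖(f : ∀ _ : ℕ, ℝ) n‖ = c) : ‖f‖ = c := by
  rw [lp.norm_eq_ciSup]
  refine le_antisymm (ciSup_le h1) ?_
  rw [← h2]
  exact le_ciSup ⟨c, by rintro r ⟨i, rfl⟩; exact h1 i⟩ n

lemma UDnorm_ind_add_single_mem {S : Set ℕ} {n : ℕ} (hn : n ∈ S) :
    ‖UDind S + UDind {n}‖ = 2 := by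
  refine UDnorm_eq _ 2 (fun i => ?_) n ?_
  · simp only [lp.coeFn_add, Pi.add_apply, UDind_apply]
    by_cases h2 : i = n
    · subst h2; simp [Set.indicator, hn]; norm_num
    · by_cases h1 : i ∈ S <;> simp [Set.indicator, h1, h2] <;> norm_num
  · simp only [lp.coeFn_add, Pi.add_apply, UDind_apply]
    simp [Set.indicator, hn]
    norm_num

lemma UDnorm_ind_add_single_not_mem {S : Set ℕ} {n : ℕ} (hn : n ∉ S) :
    ‖UDind S + UDind {n}‖ = 1 := by
  refine UDnorm_eq _ 1 (fun i => ?_) n ?_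
  · simp only [lp.coeFn_add, Pi.add_apply, UDind_apply]
    by_cases h2 : i = n
    · subst h2; simp [Set.indicator, hn]
    · by_cases h1 : i ∈ S <;> simp [Set.indicator, h1, h2] <;> norm_num
  · simp only [lp.coeFn_add, Pi.add_apply, UDind_apply]
    simp [Set.indicator, hn]

/-- The closed span of the "unit vectors" in ℓ∞ (a copy of c₀). -/
def UDA : Submodule ℝ UDlinf :=
  (Submodule.span ℝ (Set.range fun n : ℕ => UDind {n})).topologicalClosure

/-- The closed span of the unit vectors together with the indicator of `S`. -/
def UDB (S : Set ℕ) : Submodule ℝ UDlinf :=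
  (Submodule.span ℝ (insert (UDind S) (Set.range fun n : ℕ => UDind {n}))).topologicalClosure

lemma UDA_le_UDB (S : Set ℕ) : UDA ≤ UDB S :=
  Submodule.topologicalClosure_mono (Submodule.span_mono (Set.subset_insert _ _))

lemma UDind_mem_UDB (S : Set ℕ) : UDind S ∈ UDB S :=
  Submodule.le_topologicalClosure _ (Submodule.subset_span (Set.mem_insert _ _))

lemma UDsingle_mem_UDA (n : ℕ) : UDind {n} ∈ UDA :=
  Submodule.le_topologicalClosure _ (Submodule.subset_span ⟨n, rfl⟩)

instance : CompleteSpace ↥UDA :=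
  (Submodule.isClosed_topologicalClosure _).completeSpace_coe

instance (S : Set ℕ) : CompleteSpace ↥(UDB S) :=
  (Submodule.isClosed_topologicalClosure _).completeSpace_coe

instance : TopologicalSpace.SeparableSpace ↥UDA := by
  have : TopologicalSpace.IsSeparable (UDA : Set UDlinf) := by
    rw [UDA, Submodule.topologicalClosure_coe]
    exact ((Set.countable_range _).isSeparable.span).closure
  exact this.separableSpace

instance (S : Set ℕ) : TopologicalSpace.SeparableSpace ↥(UDB S) := by
  have : TopologicalSpace.IsSeparable ((UDB S) : Set UDlinf) := by
    rw [UDB, Submodule.topologicalClosure_coe]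
    exact (((Set.countable_range _).insert _).isSeparable.span).closure
  exact this.separableSpace

/-- Inclusion of `UDA` into `UDB S` as a linear isometry. -/
def UDincl (S : Set ℕ) : ↥UDA →ₗᵢ[ℝ] ↥(UDB S) :=
  { toLinearMap := Submodule.inclusion (UDA_le_UDB S)
    norm_map' := fun x => rfl }

end UDaux

/-- The zero map from the trivial space, as a linear isometry. -/
def UDzeroIso (X : Type*) [NormedAddCommGroup X] [NormedSpace ℝ X] :
    (Fin 0 → ℝ) →ₗᵢ[ℝ] X :=
  { toLinearMap := 0
    norm_map' := fun x => by
      show ‖(0 : X)‖ = ‖x‖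
      rw [norm_zero, Subsingleton.elim x 0, norm_zero] }


/-- A Banach space of universal disposition for separable spaces has density character
at least the continuum: every dense subset has cardinality at least `𝔠`. -/
theorem dense_ge_continuum_of_univDispSeparable (U : Type*)
    [NormedAddCommGroup U] [NormedSpace ℝ U] [CompleteSpace U]
    (hU : UnivDispSeparable U) :
    ∀ D : Set U, Dense D → Cardinal.continuum ≤ #D := by
  intro D hD
  obtain ⟨uA, -⟩ := hU (Fin 0 → ℝ) ↥UDA (UDzeroIso U) (UDzeroIso ↥UDA)
  choose uB huB using fun S : Set ℕ => hU ↥UDA ↥(UDB S) uA (UDincl S)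
  set x : Set ℕ → U := fun S => uB S ⟨UDind S, UDind_mem_UDB S⟩ with hx
  have key : ∀ S T : Set ℕ, ∀ n : ℕ, n ∈ S → n ∉ T → (1:ℝ) ≤ ‖x S - x T‖ := by
    intro S T n hnS hnT
    set y : ↥UDA := ⟨UDind {n}, UDsingle_mem_UDA n⟩ with hy
    have norm_comp : ∀ (R : Set ℕ) (h : UDind R ∈ UDB R),
        ‖x R - uA (-y)‖ = ‖UDind R + UDind {n}‖ := by
      intro R h
      have h1 : uA (-y) = uB R (UDincl R (-y)) := (huB R (-y)).symm
      rw [hx]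
      simp only [h1]
      rw [← map_sub, (uB R).norm_map]
      have h2 : ((⟨UDind R, UDind_mem_UDB R⟩ : ↥(UDB R)) - UDincl R (-y))
          = (⟨UDind R + UDind {n}, (UDB R).add_mem (UDind_mem_UDB R)
              (UDA_le_UDB R (UDsingle_mem_UDA n))⟩ : ↥(UDB R)) := by
        apply Subtype.ext
        show UDind R - (-(UDind {n})) = UDind R + UDind {n}
        abel
      rw [h2]
      rfl
    have e1 : ‖x S - uA (-y)‖ = 2 := by
      rw [norm_comp S (UDind_mem_UDB S)]; exact UDnorm_ind_add_single_mem hnS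
    have e2 : ‖x T - uA (-y)‖ = 1 := by
      rw [norm_comp T (UDind_mem_UDB T)]; exact UDnorm_ind_add_single_not_mem hnT
    have := norm_sub_norm_le (x S - uA (-y)) (x T - uA (-y))
    rw [e1, e2] at this
    have heq : x S - uA (-y) - (x T - uA (-y)) = x S - x T := by abel
    rw [heq] at this
    linarith
  have hsep : ∀ S T : Set ℕ, S ≠ T → (1:ℝ) ≤ ‖x S - x T‖ := by
    intro S T hST
    obtain ⟨n, hn⟩ : ∃ n, ¬(n ∈ S ↔ n ∈ T) := by
      by_contra h; push_neg at h; exact hST (Set.ext h)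
    by_cases hnS : n ∈ S
    · exact key S T n hnS (fun hnT => hn ⟨fun _ => hnT, fun _ => hnS⟩)
    · have hnT : n ∈ T := by tauto
      rw [norm_sub_rev]
      exact key T S n hnT hnS
  choose d hdD hdist using fun S : Set ℕ =>
    hD.exists_dist_lt (x S) (by norm_num : (0:ℝ) < 1/2)
  have hinj : Function.Injective (fun S : Set ℕ => (⟨d S, hdD S⟩ : D)) := by
    intro S T h
    by_contra hST
    have h1 : (1:ℝ) ≤ ‖x S - x T‖ := hsep S T hST
    have hd : d S = d T := congrArg Subtype.val h
    have h2 : dist (x S) (x T) < 1 := by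
      calc dist (x S) (x T) ≤ dist (x S) (d S) + dist (d S) (x T) := dist_triangle _ _ _
        _ < 1/2 + 1/2 := add_lt_add (hdist S) (by rw [hd, dist_comm]; exact hdist T)
        _ = 1 := by norm_num
    rw [dist_eq_norm] at h2
    linarith
  have hle := Cardinal.lift_mk_le'.mpr ⟨⟨_, hinj⟩⟩
  simpa [Cardinal.mk_set, Cardinal.mk_nat, Cardinal.two_power_aleph0,
    Cardinal.lift_continuum, Cardinal.lift_id] using hle
end

section
/- If U is a real Banach space of universal disposition for separable spaces, then every real Banach space X admitting a dense subset of cardinality at most ℵ₁ embeds isometrically into U; that is, there exists a linear isometric embedding X → U. -/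
open Cardinal TopologicalSpace

universe u v


section ShrinkNormed
variable (E : Type u) [NormedAddCommGroup E] [NormedSpace ℝ E] [Small.{0} E]

noncomputable instance Shrink.normedAddCommGroup : NormedAddCommGroup (Shrink.{0} E) :=
  inferInstance

noncomputable instance Shrink.normedSpace : NormedSpace ℝ (Shrink.{0} E) :=
  inferInstance

noncomputable def shrinkIso : Shrink.{0} E ≃ₗᵢ[ℝ] E :=
  ⟨Shrink.linearEquiv ℝ E, fun _ => rfl⟩

noncomputable instance Shrink.completeSpace' [CompleteSpace E] :
    CompleteSpace (Shrink.{0} E) :=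
  (shrinkIso E).toIsometryEquiv.completeSpace_iff.2 ‹_›

noncomputable instance Shrink.separableSpace' [SeparableSpace E] :
    SeparableSpace (Shrink.{0} E) :=
  (shrinkIso E).symm.surjective.denseRange.separableSpace (shrinkIso E).symm.continuous
end ShrinkNormed

variable {U : Type v} [NormedAddCommGroup U] [NormedSpace ℝ U] [CompleteSpace U]
variable {X : Type u} [NormedAddCommGroup X] [NormedSpace ℝ X]

noncomputable def inclIso {M N : Submodule ℝ X} (h : M ≤ N) : M →ₗᵢ[ℝ] N :=
  ⟨Submodule.inclusion h, fun _ => rfl⟩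

theorem exists_extend_closure {M N : Submodule ℝ X} (h : M ≤ N)
    (hd : (N : Set X) ⊆ closure (M : Set X)) (f : M →ₗᵢ[ℝ] U) :
    ∃ g : N →ₗᵢ[ℝ] U, ∀ (x : X) (hx : x ∈ M), g ⟨x, h hx⟩ = f ⟨x, hx⟩ := by
  set i : M →L[ℝ] N := (inclIso h).toContinuousLinearMap with hi
  have hrange : Subtype.val '' Set.range i = (M : Set X) := by
    ext x
    constructor
    · rintro ⟨y, ⟨z, rfl⟩, rfl⟩; exact z.2
    · intro hx; exact ⟨i ⟨x, hx⟩, ⟨⟨x, hx⟩, rfl⟩, rfl⟩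
  have hdr : DenseRange i := by
    intro y
    rw [Topology.IsEmbedding.subtypeVal.closure_eq_preimage_closure_image, hrange]
    exact hd y.2
  have hui : IsUniformInducing i := (inclIso h).isometry.isUniformInducing
  set g0 : N →L[ℝ] U := f.toContinuousLinearMap.extend i with hg0
  have heq : ∀ x : M, g0 (i x) = f x := fun x =>
    ContinuousLinearMap.extend_eq f.toContinuousLinearMap hdr hui x
  have hnorm : ∀ y : N, ‖g0 y‖ = ‖y‖ := by
    intro y
    refine hdr.induction_on y (isClosed_eq g0.continuous.norm continuous_norm) fun x => ?_
    rw [heq x, f.norm_map]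
    exact congrArg _ rfl
  refine ⟨⟨g0.toLinearMap, hnorm⟩, fun x hx => ?_⟩
  exact heq ⟨x, hx⟩

theorem aux_embed [CompleteSpace X] [Small.{0} X]
    (hU : UnivDispSeparable U)
    (I : Type u) [LinearOrder I] (hIio : ∀ i : I, (Set.Iio i).Countable)
    (e : I → X) (hdense : Dense ((Submodule.span ℝ (Set.range e) : Submodule ℝ X) : Set X)) :
    Nonempty (X →ₗᵢ[ℝ] U) := by
  classical
  -- the closed span of an initial part of the enumeration
  set S : Set I → Submodule ℝ X := fun s => (Submodule.span ℝ (e '' s)).topologicalClosure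
    with hS
  have Sclosed : ∀ s, IsClosed ((S s : Set X)) := fun s =>
    Submodule.isClosed_topologicalClosure _
  have Smono : ∀ {s t : Set I}, s ⊆ t → S s ≤ S t := fun hst =>
    Submodule.topologicalClosure_mono (Submodule.span_mono (Set.image_mono hst))
  have Ssep : ∀ {s : Set I}, s.Countable → SeparableSpace (S s) := by
    intro s hs
    have h1 : IsSeparable ((Submodule.span ℝ (e '' s) : Submodule ℝ X) : Set X) :=
      (hs.image e).isSeparable.span
    have h2 : IsSeparable ((S s : Set X)) := by
      rw [hS]
      exact h1.closure.mono (by rw [Submodule.topologicalClosure_coe])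
    exact h2.separableSpace
  haveI Scomplete : ∀ s, CompleteSpace (S s) := fun s => (Sclosed s).completeSpace_coe
  -- the partial isometries
  let P := {p : Σ s : Set I, (S s →ₗᵢ[ℝ] U) // IsLowerSet p.1}
  let R : P → P → Prop := fun p q =>
    ∃ h : p.1.1 ⊆ q.1.1, ∀ (x : X) (hx : x ∈ S p.1.1), q.1.2 ⟨x, Smono h hx⟩ = p.1.2 ⟨x, hx⟩
  haveI : IsRefl P R := ⟨fun p => ⟨subset_rfl, fun x hx => rfl⟩⟩
  have Rtrans : ∀ {a b c : P}, R a b → R b c → R a c := by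
    rintro a b c ⟨hab, eab⟩ ⟨hbc, ebc⟩
    exact ⟨hab.trans hbc, fun x hx => (ebc x (Smono hab hx)).trans (eab x hx)⟩
  -- trivial partial isometry
  have hS0 : ∀ x : S (∅ : Set I), (x : X) = 0 := by
    intro x
    have hx0 : (x : X) ∈ closure ((Submodule.span ℝ (e '' (∅ : Set I)) : Submodule ℝ X) : Set X) := by
      rw [← Submodule.topologicalClosure_coe]
      exact x.2
    rw [Set.image_empty, Submodule.span_empty, Submodule.bot_coe, closure_singleton] at hx0
    exact hx0
  let f0 : S (∅ : Set I) →ₗᵢ[ℝ] U :=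
    ⟨0, fun x => by
      rw [show ‖x‖ = ‖(x : X)‖ from rfl, hS0 x]
      simp⟩
  let p0 : P := ⟨⟨∅, f0⟩, fun _ _ _ hx => absurd hx (Set.notMem_empty _)⟩
  -- chain bound
  have chainBound : ∀ c : Set P, IsChain R c → ∃ ub, ∀ a ∈ c, R a ub := by
    intro c hc
    rcases c.eq_empty_or_nonempty with rfl | hne
    · exact ⟨p0, fun a ha => absurd ha (Set.notMem_empty _)⟩
    haveI : Nonempty c := hne.to_subtype
    set t : Set I := ⋃ p : c, p.1.1.1 with ht
    have hlow : IsLowerSet t := isLowerSet_iUnion fun p => p.1.2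
    have hdir : Directed (· ≤ ·) (fun p : c => S p.1.1.1) := by
      intro p q
      rcases hc.total p.2 q.2 with ⟨hsub, -⟩ | ⟨hsub, -⟩
      · exact ⟨q, Smono hsub, le_rfl⟩
      · exact ⟨p, le_rfl, Smono hsub⟩
    set M : Submodule ℝ X := ⨆ p : c, S p.1.1.1 with hM
    have memM : ∀ x : M, ∃ p : c, (x : X) ∈ S p.1.1.1 := fun x =>
      (Submodule.mem_iSup_of_directed _ hdir).1 x.2
    choose pick hpick using memM
    set g0 : M → U := fun x => (pick x).1.1.2 ⟨x, hpick x⟩ with hg0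
    have key : ∀ (p : c) (x : M) (hx : (x : X) ∈ S p.1.1.1), g0 x = p.1.1.2 ⟨x, hx⟩ := by
      intro p x hx
      rcases hc.total (pick x).2 p.2 with ⟨hsub, hext⟩ | ⟨hsub, hext⟩
      · exact (hext x (hpick x)).symm
      · exact hext x hx
    have hadd : ∀ x y : M, g0 (x + y) = g0 x + g0 y := by
      intro x y
      rcases hdir (pick x) (pick y) with ⟨r, hr1, hr2⟩
      have hx : (x : X) ∈ S r.1.1.1 := hr1 (hpick x)
      have hy : (y : X) ∈ S r.1.1.1 := hr2 (hpick y)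
      have hxy : ((x + y : M) : X) ∈ S r.1.1.1 := (S r.1.1.1).add_mem hx hy
      rw [key r x hx, key r y hy, key r (x + y) hxy]
      rw [show (⟨((x + y : M) : X), hxy⟩ : S r.1.1.1) = ⟨x, hx⟩ + ⟨y, hy⟩ from rfl, map_add]
    have hsmul : ∀ (a : ℝ) (x : M), g0 (a • x) = a • g0 x := by
      intro a x
      have hx : (x : X) ∈ S (pick x).1.1.1 := hpick x
      have hax : ((a • x : M) : X) ∈ S (pick x).1.1.1 := (S _).smul_mem a hx
      rw [key (pick x) (a • x) hax, hg0]
      rw [show (⟨((a • x : M) : X), hax⟩ : S (pick x).1.1.1) = a • ⟨x, hx⟩ from rfl, map_smul]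
    have hnorm : ∀ x : M, ‖g0 x‖ = ‖x‖ := fun x => (pick x).1.1.2.norm_map _
    let gM : M →ₗᵢ[ℝ] U :=
      ⟨{ toFun := g0, map_add' := hadd, map_smul' := hsmul }, hnorm⟩
    have hMle : M ≤ S t := iSup_le fun p =>
      Smono (Set.subset_iUnion (fun p : c => p.1.1.1) p)
    have hsub2 : (S t : Set X) ⊆ closure (M : Set X) := by
      have h1 : Submodule.span ℝ (e '' t) ≤ M := by
        rw [Submodule.span_le]
        rintro x ⟨i, hi, rfl⟩
        rcases Set.mem_iUnion.1 hi with ⟨p, hp⟩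
        have h2 : e i ∈ S p.1.1.1 :=
          Submodule.le_topologicalClosure _ (Submodule.subset_span ⟨i, hp, rfl⟩)
        exact le_iSup (fun p : c => S p.1.1.1) p h2
      rw [show (S t : Set X) = closure (Submodule.span ℝ (e '' t) : Set X) from
        Submodule.topologicalClosure_coe _]
      exact closure_mono h1
    obtain ⟨g, hg⟩ := exists_extend_closure hMle hsub2 gM
    refine ⟨⟨⟨t, g⟩, hlow⟩, fun a ha => ?_⟩
    refine ⟨Set.subset_iUnion (fun p : c => p.1.1.1) ⟨a, ha⟩, fun x hx => ?_⟩
    have hxM : x ∈ M := le_iSup (fun p : c => S p.1.1.1) ⟨a, ha⟩ hx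
    have := hg x hxM
    rw [this]
    exact key ⟨a, ha⟩ ⟨x, hxM⟩ hx
  have Rtrans' : ∀ {a b c : P}, R a b → R b c → R a c := fun h1 h2 => Rtrans h1 h2
  obtain ⟨m, hmax⟩ := exists_maximal_of_chains_bounded chainBound Rtrans'
  by_cases huniv : m.1.1 = Set.univ
  · -- the maximal isometry is defined on a dense subspace, i.e. everywhere
    have htop : ∀ x : X, x ∈ S m.1.1 := by
      intro x
      have h1 : ((Submodule.span ℝ (Set.range e) : Submodule ℝ X) : Set X)
          ⊆ (S (Set.univ : Set I) : Set X) := by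
        intro y hy
        refine Submodule.le_topologicalClosure _ ?_
        rw [Set.image_univ]
        exact hy
      have h2 : Dense (S (Set.univ : Set I) : Set X) := hdense.mono h1
      have h3 : (S (Set.univ : Set I) : Set X) = Set.univ :=
        (Sclosed _).closure_eq ▸ h2.closure_eq
      rw [huniv]
      exact Set.eq_univ_iff_forall.1 h3 x
    refine ⟨⟨{ toFun := fun x => m.1.2 ⟨x, htop x⟩,
               map_add' := ?_, map_smul' := ?_ }, ?_⟩⟩
    · intro x y
      show m.1.2 ⟨x + y, htop _⟩ = m.1.2 ⟨x, htop x⟩ + m.1.2 ⟨y, htop y⟩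
      rw [show (⟨x + y, htop _⟩ : S m.1.1) = ⟨x, htop x⟩ + ⟨y, htop y⟩ from rfl, map_add]
    · intro a x
      show m.1.2 ⟨a • x, htop _⟩ = (RingHom.id ℝ) a • m.1.2 ⟨x, htop x⟩
      rw [show (⟨a • x, htop _⟩ : S m.1.1) = a • (⟨x, htop x⟩ : S m.1.1) from rfl, map_smul]
      rfl
    · intro x
      exact m.1.2.norm_map _
  · exfalso
    obtain ⟨i, hi⟩ : ∃ i : I, i ∉ m.1.1 := by
      by_contra h
      push_neg at h
      exact huniv (Set.eq_univ_of_forall h)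
    have hcnt : m.1.1.Countable := by
      refine (hIio i).mono fun j hj => ?_
      rcases lt_or_ge j i with h | h
      · exact h
      · exact absurd (m.2 h hj) hi
    set s' : Set I := m.1.1 ∪ Set.Iic i with hs'
    have hlow' : IsLowerSet s' := m.2.union (isLowerSet_Iic i)
    have hcnt' : s'.Countable := by
      refine hcnt.union (((hIio i).insert i).mono fun j hj => ?_)
      rcases eq_or_lt_of_le (Set.mem_Iic.1 hj) with h | h
      · exact Set.mem_insert_iff.2 (Or.inl h)
      · exact Set.mem_insert_iff.2 (Or.inr h)
    have hle : S m.1.1 ≤ S s' := Smono Set.subset_union_left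
    haveI := Ssep hcnt
    haveI := Ssep hcnt'
    obtain ⟨u', hu'⟩ := hU (Shrink.{0} (S m.1.1)) (Shrink.{0} (S s'))
      (m.1.2.comp (shrinkIso (S m.1.1)).toLinearIsometry)
      ((shrinkIso (S s')).symm.toLinearIsometry.comp
        ((inclIso hle).comp (shrinkIso (S m.1.1)).toLinearIsometry))
    have hext : R m ⟨⟨s', u'.comp (shrinkIso (S s')).symm.toLinearIsometry⟩, hlow'⟩ := by
      refine ⟨Set.subset_union_left, fun x hx => ?_⟩
      have h5 := hu' ((shrinkIso (S m.1.1)).symm ⟨x, hx⟩)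
      simp only [LinearIsometry.coe_comp, Function.comp_apply,
        LinearIsometryEquiv.coe_toLinearIsometry,
        LinearIsometryEquiv.apply_symm_apply] at h5 ⊢
      exact h5
    obtain ⟨hsub, -⟩ := hmax _ hext
    exact hi (hsub (Set.mem_union_right _ (Set.mem_Iic.2 le_rfl)))

/-- A space of universal disposition for separable spaces contains an isometric copy of
every Banach space with a dense subset of cardinality at most `ℵ₁`. -/
theorem embeds_of_density_le_aleph_one (U : Type*)
    [NormedAddCommGroup U] [NormedSpace ℝ U] [CompleteSpace U]
    (hU : UnivDispSeparable U)
    (X : Type*) [NormedAddCommGroup X] [NormedSpace ℝ X] [CompleteSpace X]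
    (hX : ∃ D : Set X, Dense D ∧ #D ≤ Cardinal.aleph 1) :
    Nonempty (X →ₗᵢ[ℝ] U) := by
  classical
  obtain ⟨D, hD, hcard⟩ := hX
  haveI : Nonempty X := ⟨0⟩
  have hDne : D.Nonempty := hD.nonempty
  haveI : Nonempty D := hDne.to_subtype
  haveI hsmallD : Small.{0} D := by
    have h1 : #D ≤ #(ULift ℝ) := by
      rw [Cardinal.mk_uLift, Cardinal.mk_real, Cardinal.lift_continuum]
      exact hcard.trans aleph_one_le_continuum
    obtain ⟨f⟩ := (Cardinal.le_def _ _).1 h1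
    exact small_of_injective f.injective
  haveI : Small.{0} X := by
    have hseq : ∀ (x : X) (n : ℕ), ∃ d : D, dist x d < 1 / (n + 1) := by
      intro x n
      obtain ⟨d, hd1, hd2⟩ := Metric.mem_closure_iff.1 (hD x) (1 / (n + 1)) (by positivity)
      exact ⟨⟨d, hd1⟩, hd2⟩
    choose g hg using hseq
    have hginj : Function.Injective g := by
      intro x y hxy
      by_contra hne
      have hpos : 0 < dist x y := dist_pos.2 hne
      obtain ⟨n, hn⟩ := exists_nat_one_div_lt (show (0 : ℝ) < dist x y / 2 by linarith)
      have h1 : dist x y ≤ dist x (g x n) + dist ((g x n : D) : X) y := dist_triangle _ _ _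
      have h2 : dist ((g x n : D) : X) y = dist y ((g y n : D) : X) := by rw [hxy, dist_comm]
      have h3 := hg x n
      have h4 := hg y n
      have hlt : (1 : ℝ) / (n + 1) < dist x y / 2 := hn
      linarith [h1, h2 ▸ h1]
    exact small_of_injective hginj
  let I : Type _ := (Cardinal.aleph 1 : Cardinal).ord.ToType
  have hIio : ∀ i : I, (Set.Iio i).Countable := fun i =>
    (Cardinal.countable_iff_lt_aleph_one _).2 (Cardinal.mk_Iio_ord_toType i)
  have hDI : #D ≤ #I := by
    rw [Cardinal.mk_toType, Cardinal.card_ord]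
    exact hcard
  obtain ⟨f⟩ := (Cardinal.le_def _ _).1 hDI
  obtain ⟨d₀⟩ : Nonempty D := inferInstance
  let e : I → X := fun i => if h : ∃ d : D, f d = i then ((Classical.choose h : D) : X) else d₀
  have hDe : ∀ d : D, (d : X) ∈ Set.range e := by
    intro d
    refine ⟨f d, ?_⟩
    have h : ∃ d' : D, f d' = f d := ⟨d, rfl⟩
    have h5 : Classical.choose h = d := f.injective (Classical.choose_spec h)
    simp only [e, dif_pos h, h5]
  have hdense : Dense ((Submodule.span ℝ (Set.range e) : Submodule ℝ X) : Set X) :=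
    hD.mono fun x hx => Submodule.subset_span (hDe ⟨x, hx⟩)
  exact aux_embed hU I hIio e hdense
end

section
/- Assume the continuum hypothesis (𝔠 = ℵ₁). If U and V are real Banach spaces of universal disposition for separable spaces whose density characters equal ℵ₁, then U and V are isometrically isomorphic: there exists a surjective linear isometry U → V. -/
open Cardinal

/-- The density character of a topological space: the least cardinality of a dense subset. -/
noncomputable def densityCharacter (X : Type*) [TopologicalSpace X] : Cardinal :=
  sInf {c : Cardinal | ∃ D : Set X, Dense D ∧ #D = c}

open TopologicalSpace Filter

open Cardinal TopologicalSpace Filter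

lemma small_of_complete_separable (X : Type u) [MetricSpace X] [CompleteSpace X]
    [SeparableSpace X] [Nonempty X] : Small.{0} X := by
  classical
  obtain ⟨s, hsc, hsd⟩ := TopologicalSpace.exists_countable_dense X
  haveI : Countable s := hsc.to_subtype
  haveI : Nonempty s := hsd.nonempty.to_subtype
  set G : (ℕ → s) → X := fun f =>
    if h : ∃ x, Tendsto (fun n => (f n : X)) atTop (nhds x) then h.choose
    else Classical.arbitrary X with hG
  apply small_of_surjective (f := G)
  intro x
  have hmem : ∀ n : ℕ, ∃ y ∈ s, dist x y < 1 / (n + 1) := by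
    intro n
    have hx : x ∈ closure s := hsd x
    rw [Metric.mem_closure_iff] at hx
    exact hx _ (by positivity)
  choose y hy hd using hmem
  have ht : Tendsto (fun n => y n) atTop (nhds x) := by
    rw [Metric.tendsto_atTop]
    intro ε hε
    obtain ⟨N, hN⟩ := exists_nat_one_div_lt hε
    refine ⟨N, fun n hn => ?_⟩
    have h1 : dist x (y n) < 1 / (n + 1) := hd n
    have h2 : (1 : ℝ) / (n + 1) ≤ 1 / (N + 1) := by
      apply one_div_le_one_div_of_le (by positivity)
      exact_mod_cast Nat.succ_le_succ hn
    rw [dist_comm]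
    exact h1.trans_le (h2.trans hN.le)
  refine ⟨fun n => ⟨y n, hy n⟩, ?_⟩
  have hex : ∃ z, Tendsto (fun n => ((⟨y n, hy n⟩ : s) : X)) atTop (nhds z) := ⟨x, ht⟩
  simp only [hG, dif_pos hex]
  exact tendsto_nhds_unique hex.choose_spec ht

section ShrinkNormed

variable (A : Type u) [NormedAddCommGroup A] [NormedSpace ℝ A] [Small.{0} A]

noncomputable def shrinkNormedAddCommGroup : NormedAddCommGroup (Shrink.{0} A) :=
  NormedAddCommGroup.induced _ A ((Shrink.linearEquiv ℝ A : Shrink.{0} A ≃ₗ[ℝ] A) :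
    Shrink.{0} A →ₗ[ℝ] A) (Shrink.linearEquiv ℝ A).injective

noncomputable def shrinkNormedSpace :
    @NormedSpace ℝ (Shrink.{0} A) _ (shrinkNormedAddCommGroup A).toSeminormedAddCommGroup :=
  letI := shrinkNormedAddCommGroup A
  NormedSpace.induced ℝ _ A ((Shrink.linearEquiv ℝ A : Shrink.{0} A ≃ₗ[ℝ] A) :
    Shrink.{0} A →ₗ[ℝ] A)

noncomputable def shrinkIsometryEquiv :
    (Shrink.{0} A ≃ₗᵢ[ℝ] A) :=
  { Shrink.linearEquiv ℝ A with norm_map' := fun _ => rfl }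

end ShrinkNormed

lemma UnivDispSeparable.extend {E : Type*} [NormedAddCommGroup E] [NormedSpace ℝ E]
    (hE : UnivDispSeparable E) {A : Type*} {B : Type*}
    [NormedAddCommGroup A] [NormedSpace ℝ A] [CompleteSpace A] [SeparableSpace A]
    [NormedAddCommGroup B] [NormedSpace ℝ B] [CompleteSpace B] [SeparableSpace B]
    (u : A →ₗᵢ[ℝ] E) (j : A →ₗᵢ[ℝ] B) :
    ∃ u' : B →ₗᵢ[ℝ] E, ∀ a : A, u' (j a) = u a := by
  haveI : Small.{0} A := small_of_complete_separable A
  haveI : Small.{0} B := small_of_complete_separable B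
  let eA := shrinkIsometryEquiv A
  let eB := shrinkIsometryEquiv B
  haveI : CompleteSpace (Shrink.{0} A) := eA.toIsometryEquiv.completeSpace
  haveI : CompleteSpace (Shrink.{0} B) := eB.toIsometryEquiv.completeSpace
  haveI : SeparableSpace (Shrink.{0} A) :=
    eA.symm.surjective.denseRange.separableSpace eA.symm.continuous
  haveI : SeparableSpace (Shrink.{0} B) :=
    eB.symm.surjective.denseRange.separableSpace eB.symm.continuous
  obtain ⟨w, hw⟩ := hE (Shrink.{0} A) (Shrink.{0} B)
    (u.comp eA.toLinearIsometry)
    ((eB.symm.toLinearIsometry.comp j).comp eA.toLinearIsometry)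
  refine ⟨w.comp eB.symm.toLinearIsometry, fun a => ?_⟩
  have := hw (eA.symm a)
  simpa using this
section Step

open Pointwise
variable {E : Type u} {F : Type v}
  [NormedAddCommGroup E] [NormedSpace ℝ E] [CompleteSpace E]
  [NormedAddCommGroup F] [NormedSpace ℝ F] [CompleteSpace F]

/-- predicate: a closed separable "isometric graph" submodule of `E × F`. -/
def GoodGraph (W : Submodule ℝ (E × F)) : Prop :=
  IsClosed (W : Set (E × F)) ∧ IsSeparable (W : Set (E × F)) ∧
    ∀ p ∈ W, ‖(p : E × F).1‖ = ‖(p : E × F).2‖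

omit [CompleteSpace E] [CompleteSpace F] in
lemma norm_fst_of_goodGraph {W : Submodule ℝ (E × F)} (hg : ∀ p ∈ W, ‖(p : E × F).1‖ = ‖(p : E × F).2‖)
    (p : W) : ‖(p : E × F).1‖ = ‖p‖ := by
  have : ‖(p : E × F)‖ = max ‖(p : E × F).1‖ ‖(p : E × F).2‖ := Prod.norm_def _
  rw [show ‖p‖ = ‖(p : E × F)‖ from rfl, this, ← hg p p.2, max_self]

lemma oneStep (hF : UnivDispSeparable F) (W : Submodule ℝ (E × F)) (hW : GoodGraph W)
    (x₀ : E) :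
    ∃ W' : Submodule ℝ (E × F), GoodGraph W' ∧ W ≤ W' ∧
      x₀ ∈ W'.map (LinearMap.fst ℝ E F) := by
  obtain ⟨hWc, hWs, hWg⟩ := hW
  set X' : Submodule ℝ E :=
    (W.map (LinearMap.fst ℝ E F) ⊔ Submodule.span ℝ {x₀}).topologicalClosure with hX'
  have hX'c : IsClosed (X' : Set E) := Submodule.isClosed_topologicalClosure _
  have hX's : IsSeparable (X' : Set E) := by
    rw [hX', Submodule.topologicalClosure_coe]
    apply IsSeparable.closure
    rw [Submodule.coe_sup]
    have h1 : IsSeparable ((W.map (LinearMap.fst ℝ E F) : Set E)) := by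
      rw [Submodule.map_coe]
      exact hWs.image continuous_fst
    have h2 : IsSeparable ((Submodule.span ℝ {x₀} : Set E)) := by
      have : (Submodule.span ℝ {x₀} : Set E) = Set.range (fun c : ℝ => c • x₀) := by
        ext y
        simp [Submodule.mem_span_singleton, eq_comm]
      rw [this, ← Set.image_univ]
      exact (IsSeparable.of_separableSpace _).image (continuous_id.smul continuous_const)
    rw [← Set.image2_add, ← Set.image_prod]
    exact (h1.prod h2).image continuous_add
  haveI : CompleteSpace X' := hX'c.completeSpace_coe
  haveI : SeparableSpace X' := hX's.separableSpace
  haveI : CompleteSpace W := hWc.completeSpace_coe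
  haveI : SeparableSpace W := hWs.separableSpace
  have hfstmem : ∀ p : W, (p : E × F).1 ∈ X' := fun p =>
    Submodule.le_topologicalClosure _
      (Submodule.mem_sup_left ⟨(p : E × F), p.2, rfl⟩)
  let j : W →ₗᵢ[ℝ] X' :=
    { toLinearMap := LinearMap.codRestrict X' ((LinearMap.fst ℝ E F).comp W.subtype) hfstmem
      norm_map' := fun p => by
        rw [show ‖LinearMap.codRestrict X' ((LinearMap.fst ℝ E F).comp W.subtype) hfstmem p‖
            = ‖(p : E × F).1‖ from rfl]
        exact norm_fst_of_goodGraph hWg p }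
  let u : W →ₗᵢ[ℝ] F :=
    { toLinearMap := (LinearMap.snd ℝ E F).comp W.subtype
      norm_map' := fun p => by
        rw [show ‖((LinearMap.snd ℝ E F).comp W.subtype) p‖ = ‖(p : E × F).2‖ from rfl,
          ← hWg p p.2]
        exact norm_fst_of_goodGraph hWg p }
  obtain ⟨ψ, hψ⟩ := hF.extend u j
  let ι : X' →ₗᵢ[ℝ] E × F :=
    { toLinearMap := (X'.subtype).prod ψ.toLinearMap
      norm_map' := fun x => by
        have : ‖((X'.subtype).prod ψ.toLinearMap) x‖ = max ‖(x : E)‖ ‖ψ x‖ := Prod.norm_def _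
        rw [this, ψ.norm_map, show ‖(x : E)‖ = ‖x‖ from rfl, max_self] }
  refine ⟨LinearMap.range ι.toLinearMap, ⟨?_, ?_, ?_⟩, ?_, ?_⟩
  · have : (LinearMap.range ι.toLinearMap : Set (E × F)) = Set.range ι := by
      rw [LinearMap.coe_range]; rfl
    rw [this]
    exact ι.isometry.isClosedEmbedding.isClosed_range
  · have : (LinearMap.range ι.toLinearMap : Set (E × F)) = Set.range ι := by
      rw [LinearMap.coe_range]; rfl
    rw [this]
    exact isSeparable_range ι.continuous
  · rintro p ⟨x, rfl⟩
    show ‖(x : E)‖ = ‖ψ x‖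
    rw [ψ.norm_map]; rfl
  · rintro p hp
    refine ⟨j ⟨p, hp⟩, ?_⟩
    have h1 : X'.subtype (j ⟨p, hp⟩) = p.1 := rfl
    have h2 : ψ.toLinearMap (j ⟨p, hp⟩) = p.2 := hψ ⟨p, hp⟩
    show ((X'.subtype).prod ψ.toLinearMap) (j ⟨p, hp⟩) = p
    rw [LinearMap.prod_apply]
    exact Prod.ext h1 h2
  · have hx0 : x₀ ∈ X' :=
      Submodule.le_topologicalClosure _
        (Submodule.mem_sup_right (Submodule.mem_span_singleton_self x₀))
    exact Submodule.mem_map.2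
      ⟨ι.toLinearMap ⟨x₀, hx0⟩, LinearMap.mem_range_self _ _, rfl⟩

end Step
section Flip

variable {E : Type u} {F : Type v}
  [NormedAddCommGroup E] [NormedSpace ℝ E] [CompleteSpace E]
  [NormedAddCommGroup F] [NormedSpace ℝ F] [CompleteSpace F]

omit [CompleteSpace E] [CompleteSpace F] in
lemma goodGraph_map_prodComm (W : Submodule ℝ (E × F)) (h : GoodGraph W) :
    GoodGraph (W.map (LinearEquiv.prodComm ℝ E F).toLinearMap) := by
  obtain ⟨hc, hs, hg⟩ := h
  have hset : ((W.map (LinearEquiv.prodComm ℝ E F).toLinearMap) : Set (F × E)) =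
      Prod.swap '' (W : Set (E × F)) := by
    rw [Submodule.map_coe]; rfl
  refine ⟨?_, ?_, ?_⟩
  · rw [hset]; exact (Homeomorph.prodComm E F).isClosedMap _ hc
  · rw [hset]; exact hs.image continuous_swap
  · rintro p ⟨q, hq, rfl⟩
    exact (hg q hq).symm

omit [CompleteSpace E] [CompleteSpace F] in
lemma map_prodComm_prodComm (W : Submodule ℝ (E × F)) :
    (W.map (LinearEquiv.prodComm ℝ E F).toLinearMap).map
      (LinearEquiv.prodComm ℝ F E).toLinearMap = W := by
  rw [← Submodule.map_comp]
  have : (LinearEquiv.prodComm ℝ F E).toLinearMap.comp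
      (LinearEquiv.prodComm ℝ E F).toLinearMap = LinearMap.id := by
    ext p <;> rfl
  rw [this, Submodule.map_id]

lemma twoStep (hE : UnivDispSeparable E) (hF : UnivDispSeparable F)
    (W : Submodule ℝ (E × F)) (hW : GoodGraph W) (x₀ : E) (y₀ : F) :
    ∃ W' : Submodule ℝ (E × F), GoodGraph W' ∧ W ≤ W' ∧
      x₀ ∈ W'.map (LinearMap.fst ℝ E F) ∧ y₀ ∈ W'.map (LinearMap.snd ℝ E F) := by
  obtain ⟨W1, hW1, hWW1, hx₀⟩ := oneStep hF W hW x₀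
  obtain ⟨W2, hW2, hW1W2, hy₀⟩ :=
    oneStep hE (W1.map (LinearEquiv.prodComm ℝ E F).toLinearMap)
      (goodGraph_map_prodComm W1 hW1) y₀
  refine ⟨W2.map (LinearEquiv.prodComm ℝ F E).toLinearMap,
    goodGraph_map_prodComm W2 hW2, ?_, ?_, ?_⟩
  · have h1 : W1 ≤ W2.map (LinearEquiv.prodComm ℝ F E).toLinearMap := by
      rw [← map_prodComm_prodComm W1]
      exact Submodule.map_mono hW1W2
    exact le_trans hWW1 h1
  · have h1 : W1 ≤ W2.map (LinearEquiv.prodComm ℝ F E).toLinearMap := by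
      rw [← map_prodComm_prodComm W1]
      exact Submodule.map_mono hW1W2
    exact Submodule.map_mono h1 hx₀
  · have : (W2.map (LinearEquiv.prodComm ℝ F E).toLinearMap).map (LinearMap.snd ℝ E F) =
        W2.map (LinearMap.fst ℝ F E) := by
      rw [← Submodule.map_comp]; rfl
    rw [this]
    exact hy₀

end Flip
section Chain

variable {E : Type u} {F : Type v}
  [NormedAddCommGroup E] [NormedSpace ℝ E] [CompleteSpace E]
  [NormedAddCommGroup F] [NormedSpace ℝ F] [CompleteSpace F]

omit [CompleteSpace E] [CompleteSpace F] in
lemma goodGraph_topologicalClosure (W : Submodule ℝ (E × F))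
    (hs : IsSeparable (W : Set (E × F)))
    (hg : ∀ p ∈ W, ‖(p : E × F).1‖ = ‖(p : E × F).2‖) :
    GoodGraph W.topologicalClosure := by
  refine ⟨Submodule.isClosed_topologicalClosure _, ?_, ?_⟩
  · rw [Submodule.topologicalClosure_coe]; exact hs.closure
  · intro p hp
    have hsub : (W : Set (E × F)) ⊆ {q : E × F | ‖q.1‖ = ‖q.2‖} := fun q hq => hg q hq
    have hcl : IsClosed {q : E × F | ‖q.1‖ = ‖q.2‖} :=
      isClosed_eq continuous_fst.norm continuous_snd.norm
    have hmin := closure_minimal hsub hcl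
    have hp' : (p : E × F) ∈ closure (W : Set (E × F)) := by
      rw [← Submodule.topologicalClosure_coe]; exact hp
    exact hmin hp'

open Classical in
noncomputable def extStep (hE : UnivDispSeparable E) (hF : UnivDispSeparable F)
    (W : Submodule ℝ (E × F)) (x : E) (y : F) : Submodule ℝ (E × F) :=
  if h : GoodGraph W then (twoStep hE hF W h x y).choose else W

lemma extStep_spec (hE : UnivDispSeparable E) (hF : UnivDispSeparable F)
    (W : Submodule ℝ (E × F)) (h : GoodGraph W) (x : E) (y : F) :
    GoodGraph (extStep hE hF W x y) ∧ W ≤ extStep hE hF W x y ∧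
      x ∈ (extStep hE hF W x y).map (LinearMap.fst ℝ E F) ∧
      y ∈ (extStep hE hF W x y).map (LinearMap.snd ℝ E F) := by
  have h' := (twoStep hE hF W h x y).choose_spec
  simp only [extStep, dif_pos h]
  exact ⟨h'.1, h'.2.1, h'.2.2.1, h'.2.2.2⟩

noncomputable def chain (hE : UnivDispSeparable E) (hF : UnivDispSeparable F)
    (eE : Ordinal.{w} → E) (eF : Ordinal.{w} → F) :
    Ordinal.{w} → Submodule ℝ (E × F) :=
  Ordinal.lt_wf.fix fun α rec =>
    extStep hE hF (⨆ β : Set.Iio α, rec β β.2).topologicalClosure (eE α) (eF α)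

lemma chain_eq (hE : UnivDispSeparable E) (hF : UnivDispSeparable F)
    (eE : Ordinal.{w} → E) (eF : Ordinal.{w} → F) (α : Ordinal.{w}) :
    chain hE hF eE eF α =
      extStep hE hF
        (⨆ β : Set.Iio α, chain hE hF eE eF β).topologicalClosure (eE α) (eF α) := by
  rw [chain, WellFounded.fix_eq]

lemma chain_prop (hE : UnivDispSeparable E) (hF : UnivDispSeparable F)
    (eE : Ordinal.{w} → E) (eF : Ordinal.{w} → F) :
    ∀ α : Ordinal.{w}, α < (Cardinal.aleph 1).ord →
      GoodGraph (chain hE hF eE eF α) ∧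
      (∀ β, β < α → chain hE hF eE eF β ≤ chain hE hF eE eF α) ∧
      eE α ∈ (chain hE hF eE eF α).map (LinearMap.fst ℝ E F) ∧
      eF α ∈ (chain hE hF eE eF α).map (LinearMap.snd ℝ E F) := by
  intro α
  induction α using Ordinal.induction with
  | h α IH =>
  intro hα
  set c : Ordinal.{w} → Submodule ℝ (E × F) := chain hE hF eE eF with hc
  set S : Submodule ℝ (E × F) := ⨆ β : Set.Iio α, c β with hS
  have hgoodS : GoodGraph S.topologicalClosure := by
    rcases eq_or_ne α 0 with rfl | hne
    · have hbot : S = ⊥ := by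
        rw [hS]
        haveI : IsEmpty (Set.Iio (0 : Ordinal.{w})) := by
          constructor; rintro ⟨β, hβ⟩; exact not_lt_of_ge (zero_le (a := β)) hβ
        exact iSup_of_empty _
      rw [hbot]
      apply goodGraph_topologicalClosure
      · rw [Submodule.bot_coe]
        exact (Set.finite_singleton _).isSeparable
      · intro p hp
        rw [Submodule.mem_bot] at hp
        subst hp
        simp
    · haveI : Nonempty (Set.Iio α) := ⟨⟨0, pos_iff_ne_zero.2 hne⟩⟩
      have hmono : ∀ β γ : Set.Iio α, β.1 ≤ γ.1 → c β ≤ c γ := by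
        intro β γ h
        rcases lt_or_eq_of_le h with h' | h'
        · exact (IH γ.1 γ.2 (γ.2.trans hα)).2.1 β.1 h'
        · rw [h']
      have hdir : Directed (· ≤ ·) (fun β : Set.Iio α => c β) := by
        intro β γ
        rcases le_total β.1 γ.1 with h | h
        · exact ⟨γ, hmono β γ h, le_refl _⟩
        · exact ⟨β, le_refl _, hmono γ β h⟩
      have hcoe : (S : Set (E × F)) = ⋃ β : Set.Iio α, (c β : Set (E × F)) :=
        Submodule.coe_iSup_of_directed _ hdir
      haveI : Countable (Set.Iio α) := by
        have hcnt : (Set.Iio α).Countable := by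
          rw [Cardinal.countable_iff_lt_aleph_one, Ordinal.mk_Iio_ordinal]
          have hcard : α.card < Cardinal.aleph 1 := Cardinal.lt_ord.1 hα
          calc Cardinal.lift.{w + 1} α.card
              < Cardinal.lift.{w + 1} (Cardinal.aleph 1) := Cardinal.lift_lt.2 hcard
            _ = Cardinal.aleph 1 := by
                rw [Cardinal.lift_aleph]
                norm_num
        exact hcnt.to_subtype
      apply goodGraph_topologicalClosure
      · rw [hcoe]
        exact TopologicalSpace.isSeparable_iUnion.2
          (fun β => (IH β.1 β.2 (β.2.trans hα)).1.2.1)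
      · intro p hp
        obtain ⟨β, hβ⟩ := (Submodule.mem_iSup_of_directed _ hdir).1 hp
        exact (IH β.1 β.2 (β.2.trans hα)).1.2.2 p hβ
  have h1 := extStep_spec hE hF S.topologicalClosure hgoodS (eE α) (eF α)
  rw [show extStep hE hF S.topologicalClosure (eE α) (eF α) = c α from (chain_eq hE hF eE eF α).symm] at h1
  refine ⟨h1.1, ?_, h1.2.2.1, h1.2.2.2⟩
  intro β hβ
  calc c β ≤ S := le_iSup (fun β : Set.Iio α => c β) ⟨β, hβ⟩
    _ ≤ S.topologicalClosure := Submodule.le_topologicalClosure _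
    _ ≤ c α := h1.2.1

end Chain
section Main

variable {E : Type u} {F : Type v}
  [NormedAddCommGroup E] [NormedSpace ℝ E] [CompleteSpace E]
  [NormedAddCommGroup F] [NormedSpace ℝ F] [CompleteSpace F]

lemma main_iso (hE : UnivDispSeparable E) (hF : UnivDispSeparable F)
    (eE : Ordinal.{w} → E) (eF : Ordinal.{w} → F)
    (hdE : Dense (eE '' Set.Iio (Cardinal.aleph 1).ord))
    (hdF : Dense (eF '' Set.Iio (Cardinal.aleph 1).ord)) :
    Nonempty (E ≃ₗᵢ[ℝ] F) := by
  set ω₁ : Ordinal.{w} := (Cardinal.aleph 1).ord with hω₁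
  set c : Ordinal.{w} → Submodule ℝ (E × F) := chain hE hF eE eF with hc
  have hP := chain_prop hE hF eE eF
  have hω₁pos : (0 : Ordinal.{w}) < ω₁ := by
    rw [hω₁, Cardinal.lt_ord]
    simpa using Cardinal.aleph0_pos.trans_le (Cardinal.aleph0_le_aleph 1)
  haveI : Nonempty (Set.Iio ω₁) := ⟨⟨0, hω₁pos⟩⟩
  have hmono : ∀ β γ : Set.Iio ω₁, β.1 ≤ γ.1 → c β ≤ c γ := by
    intro β γ h
    rcases lt_or_eq_of_le h with h' | h'
    · exact (hP γ.1 γ.2).2.1 β.1 h'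
    · rw [h']
  have hdir : Directed (· ≤ ·) (fun β : Set.Iio ω₁ => c β) := by
    intro β γ
    rcases le_total β.1 γ.1 with h | h
    · exact ⟨γ, hmono β γ h, le_refl _⟩
    · exact ⟨β, le_refl _, hmono γ β h⟩
  set S : Submodule ℝ (E × F) := ⨆ β : Set.Iio ω₁, c β with hS
  set Wf : Submodule ℝ (E × F) := S.topologicalClosure with hWf
  have hcl : IsClosed (Wf : Set (E × F)) := Submodule.isClosed_topologicalClosure _
  have hgraph : ∀ p ∈ Wf, ‖(p : E × F).1‖ = ‖(p : E × F).2‖ := by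
    have hsub : (S : Set (E × F)) ⊆ {q : E × F | ‖q.1‖ = ‖q.2‖} := by
      intro q hq
      obtain ⟨β, hβ⟩ := (Submodule.mem_iSup_of_directed _ hdir).1 hq
      exact (hP β.1 β.2).1.2.2 q hβ
    have hclset : IsClosed {q : E × F | ‖q.1‖ = ‖q.2‖} :=
      isClosed_eq continuous_fst.norm continuous_snd.norm
    intro p hp
    have hp' : (p : E × F) ∈ closure (S : Set (E × F)) := by
      rw [← Submodule.topologicalClosure_coe]; exact hp
    exact closure_minimal hsub hclset hp'
  haveI : CompleteSpace Wf := hcl.completeSpace_coe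
  have hchainle : ∀ α, α < ω₁ → c α ≤ Wf := fun α hα =>
    le_trans (le_iSup (fun β : Set.Iio ω₁ => c β) ⟨α, hα⟩) (Submodule.le_topologicalClosure _)
  let fstW : Wf →ₗᵢ[ℝ] E :=
    { toLinearMap := (LinearMap.fst ℝ E F).comp Wf.subtype
      norm_map' := fun p => norm_fst_of_goodGraph hgraph p }
  let sndW : Wf →ₗᵢ[ℝ] F :=
    { toLinearMap := (LinearMap.snd ℝ E F).comp Wf.subtype
      norm_map' := fun p => by
        rw [show ‖((LinearMap.snd ℝ E F).comp Wf.subtype) p‖ = ‖(p : E × F).2‖ from rfl,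
          ← hgraph p p.2]
        exact norm_fst_of_goodGraph hgraph p }
  have hrangefst : Set.range fstW = ((Wf.map (LinearMap.fst ℝ E F)) : Set E) := by
    rw [Submodule.map_coe]
    rw [show ⇑fstW = (LinearMap.fst ℝ E F) ∘ (Wf.subtype) from rfl]
    rw [Set.range_comp]
    rw [show (⇑Wf.subtype : Wf → E × F) = Subtype.val from rfl, Subtype.range_coe]
  have hrangesnd : Set.range sndW = ((Wf.map (LinearMap.snd ℝ E F)) : Set F) := by
    rw [Submodule.map_coe]
    rw [show ⇑sndW = (LinearMap.snd ℝ E F) ∘ (Wf.subtype) from rfl]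
    rw [Set.range_comp]
    rw [show (⇑Wf.subtype : Wf → E × F) = Subtype.val from rfl, Subtype.range_coe]
  have hsurjfst : Function.Surjective fstW := by
    rw [← Set.range_eq_univ]
    have hclosed : IsClosed (Set.range fstW) := fstW.isometry.isClosedEmbedding.isClosed_range
    have hdense : Dense (Set.range fstW) := by
      apply Dense.mono _ hdE
      rintro x ⟨α, hα, rfl⟩
      have h1 : eE α ∈ (c α).map (LinearMap.fst ℝ E F) := (hP α hα).2.2.1
      have h3 := Submodule.map_mono (hchainle α hα) h1
      rw [hrangefst]; exact h3
    have := hdense.closure_eq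
    rw [hclosed.closure_eq] at this
    exact this
  have hsurjsnd : Function.Surjective sndW := by
    rw [← Set.range_eq_univ]
    have hclosed : IsClosed (Set.range sndW) := sndW.isometry.isClosedEmbedding.isClosed_range
    have hdense : Dense (Set.range sndW) := by
      apply Dense.mono _ hdF
      rintro y ⟨α, hα, rfl⟩
      have h1 : eF α ∈ (c α).map (LinearMap.snd ℝ E F) := (hP α hα).2.2.2
      have h3 := Submodule.map_mono (hchainle α hα) h1
      rw [hrangesnd]; exact h3
    have := hdense.closure_eq
    rw [hclosed.closure_eq] at this
    exact this
  exact ⟨(LinearIsometryEquiv.ofSurjective fstW hsurjfst).symm.trans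
    (LinearIsometryEquiv.ofSurjective sndW hsurjsnd)⟩

end Main
lemma exists_dense_enum {X : Type x} [TopologicalSpace X] [Nonempty X]
    (hdens : densityCharacter X = Cardinal.aleph 1) :
    ∃ e : Ordinal.{w} → X, Dense (e '' Set.Iio (Cardinal.aleph 1).ord) := by
  classical
  have hne : {c : Cardinal | ∃ D : Set X, Dense D ∧ #D = c}.Nonempty :=
    ⟨#(Set.univ : Set X), Set.univ, dense_univ, rfl⟩
  have hmem := csInf_mem hne
  rw [show sInf {c : Cardinal | ∃ D : Set X, Dense D ∧ #D = c} = densityCharacter X from rfl,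
    hdens] at hmem
  obtain ⟨D, hD, hcard⟩ := hmem
  have hω₁pos : (0 : Ordinal.{w}) < (Cardinal.aleph 1).ord := by
    rw [Cardinal.lt_ord]
    simpa using Cardinal.aleph0_pos.trans_le (Cardinal.aleph0_le_aleph 1)
  have h1 : Cardinal.lift.{w + 1} (#D) =
      Cardinal.lift.{x} (#(Set.Iio ((Cardinal.aleph 1 : Cardinal.{w}).ord))) := by
    rw [hcard, Ordinal.mk_Iio_ordinal, Cardinal.card_ord, Cardinal.lift_lift,
      Cardinal.lift_aleph, Cardinal.lift_aleph]
    simp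
  obtain ⟨e⟩ := Cardinal.lift_mk_eq'.1 h1
  refine ⟨fun α => if h : α < (Cardinal.aleph 1).ord then (e.symm ⟨α, h⟩ : X)
    else (e.symm ⟨0, hω₁pos⟩ : X), ?_⟩
  apply Dense.mono _ hD
  intro d hd
  refine ⟨(e ⟨d, hd⟩).1, (e ⟨d, hd⟩).2, ?_⟩
  have hx : ((e ⟨d, hd⟩ : Set.Iio (Cardinal.aleph 1).ord) : Ordinal) < (Cardinal.aleph 1).ord :=
    (e ⟨d, hd⟩).2
  simp only [dif_pos hx]
  exact congrArg Subtype.val (e.symm_apply_apply ⟨d, hd⟩)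

/-- Under CH, any two Banach spaces of universal disposition for separable spaces with
density character `ℵ₁` are isometrically isomorphic. -/
theorem unique_univDispSeparable_of_CH
    (hCH : Cardinal.continuum.{0} = Cardinal.aleph 1)
    (U : Type*) [NormedAddCommGroup U] [NormedSpace ℝ U] [CompleteSpace U]
    (V : Type*) [NormedAddCommGroup V] [NormedSpace ℝ V] [CompleteSpace V]
    (hU : UnivDispSeparable U) (hV : UnivDispSeparable V)
    (hUdens : densityCharacter U = Cardinal.aleph 1)
    (hVdens : densityCharacter V = Cardinal.aleph 1) :
    Nonempty (U ≃ₗᵢ[ℝ] V) := by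
  haveI : Nonempty U := ⟨0⟩
  haveI : Nonempty V := ⟨0⟩
  obtain ⟨eU, heU⟩ := exists_dense_enum.{_, 0} hUdens
  obtain ⟨eV, heV⟩ := exists_dense_enum.{_, 0} hVdens
  exact main_iso hU hV eU eV heU heV
end

section
/- Let X be a real Banach space, F ⊆ X a finite-dimensional subspace, and t : F → c₀ a bounded linear operator. Then t admits a compact extension with the same norm: there exists a bounded linear operator T : X → c₀ that is a compact operator, satisfies T(x) = t(x) for all x ∈ F, and ‖T‖ = ‖t‖. -/
open scoped ZeroAtInfty
open Filter Topology Metric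

namespace C0CompactExt

/-- Build an element of `C₀(ℕ, ℝ)` from a sequence tending to `0`. -/
noncomputable def mkC0 (a : ℕ → ℝ) (h : Tendsto a atTop (𝓝 0)) : C₀(ℕ, ℝ) :=
  ⟨⟨a, continuous_of_discreteTopology⟩, by rwa [cocompact_eq_atTop]⟩

@[simp] lemma mkC0_apply (a : ℕ → ℝ) (h : Tendsto a atTop (𝓝 0)) (n : ℕ) :
    mkC0 a h n = a n := rfl

lemma normC0_le (f : C₀(ℕ, ℝ)) {C : ℝ} (hC : 0 ≤ C) (h : ∀ n, ‖f n‖ ≤ C) : ‖f‖ ≤ C := by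
  rw [← ZeroAtInftyContinuousMap.norm_toBCF_eq_norm]
  exact (BoundedContinuousFunction.norm_le hC).mpr h

lemma normC0_apply_le (f : C₀(ℕ, ℝ)) (n : ℕ) : ‖f n‖ ≤ ‖f‖ := by
  rw [← ZeroAtInftyContinuousMap.norm_toBCF_eq_norm]
  exact f.toBCF.norm_coe_le_norm n

lemma tendsto_apply_c0 (f : C₀(ℕ, ℝ)) : Tendsto (fun n => f n) atTop (𝓝 0) := by
  have := f.zero_at_infty'
  rwa [cocompact_eq_atTop] at this

variable {X : Type*} [NormedAddCommGroup X] [NormedSpace ℝ X]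

/-- The operator `x ↦ (g n x)ₙ` built from functionals with norms dominated by a null
sequence `c`. -/
noncomputable def opC0 (g : ℕ → X →L[ℝ] ℝ) (c : ℕ → ℝ) (hg : ∀ n, ‖g n‖ ≤ c n)
    (hc : Tendsto c atTop (𝓝 0)) (C : ℝ) (hC : ∀ n, c n ≤ C) : X →L[ℝ] C₀(ℕ, ℝ) :=
  LinearMap.mkContinuous
    { toFun := fun x => mkC0 (fun n => g n x) <| by
        refine squeeze_zero_norm (a := fun n => c n * ‖x‖)
          (fun n => ((g n).le_opNorm x).trans ?_) ?_
        · exact mul_le_mul_of_nonneg_right (hg n) (norm_nonneg x)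
        · simpa using hc.mul_const ‖x‖
      map_add' := fun x y => by ext n; simp
      map_smul' := fun r x => by ext n; simp }
    C
    (fun x => by
      have hC0 : 0 ≤ C := le_trans (le_trans (norm_nonneg (g 0)) (hg 0)) (hC 0)
      refine normC0_le _ (mul_nonneg hC0 (norm_nonneg x)) fun n => ?_
      calc ‖g n x‖ ≤ ‖g n‖ * ‖x‖ := (g n).le_opNorm x
        _ ≤ C * ‖x‖ := by
            exact mul_le_mul_of_nonneg_right ((hg n).trans (hC n)) (norm_nonneg x))

@[simp] lemma opC0_apply (g : ℕ → X →L[ℝ] ℝ) (c : ℕ → ℝ) (hg : ∀ n, ‖g n‖ ≤ c n)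
    (hc : Tendsto c atTop (𝓝 0)) (C : ℝ) (hC : ∀ n, c n ≤ C) (x : X) (n : ℕ) :
    opC0 g c hg hc C hC x n = g n x := rfl

lemma opC0_norm_le (g : ℕ → X →L[ℝ] ℝ) (c : ℕ → ℝ) (hg : ∀ n, ‖g n‖ ≤ c n)
    (hc : Tendsto c atTop (𝓝 0)) (C : ℝ) (hC : ∀ n, c n ≤ C) :
    ‖opC0 g c hg hc C hC‖ ≤ C := by
  have hC0 : 0 ≤ C := le_trans (le_trans (norm_nonneg (g 0)) (hg 0)) (hC 0)
  exact LinearMap.mkContinuous_norm_le _ hC0 _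

/-- The finite rank inclusion `(Fin k → ℝ) → C₀(ℕ, ℝ)`. -/
noncomputable def inclJ (k : ℕ) : (Fin k → ℝ) →L[ℝ] C₀(ℕ, ℝ) :=
  LinearMap.mkContinuous
    { toFun := fun v => mkC0 (fun n => if h : n < k then v ⟨n, h⟩ else 0) <| by
        refine tendsto_atTop_of_eventually_const (i₀ := k) fun n hn => ?_
        simp [Nat.not_lt.mpr hn]
      map_add' := fun v w => by
        ext n; by_cases h : n < k <;> simp [h]
      map_smul' := fun r v => by
        ext n; by_cases h : n < k <;> simp [h] }
    1
    (fun v => by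
      refine normC0_le _ (by simpa using norm_nonneg v) fun n => ?_
      simp only [mkC0_apply, LinearMap.coe_mk, AddHom.coe_mk]
      rw [one_mul]
      by_cases h : n < k
      · simpa [h] using norm_le_pi_norm v ⟨n, h⟩
      · simp [h])

lemma inclJ_apply (k : ℕ) (v : Fin k → ℝ) (n : ℕ) :
    inclJ k v n = if h : n < k then v ⟨n, h⟩ else 0 := rfl

/-- A continuous linear map from a finite-dimensional space is a compact operator. -/
lemma isCompactOperator_of_finiteDimensional {E G : Type*} [NormedAddCommGroup E]
    [NormedSpace ℝ E] [FiniteDimensional ℝ E] [NormedAddCommGroup G] [NormedSpace ℝ G]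
    (f : E →L[ℝ] G) : IsCompactOperator f :=
  ⟨f '' Metric.closedBall 0 1,
    (isCompact_closedBall (0 : E) 1).image f.continuous,
    Filter.mem_of_superset (Metric.closedBall_mem_nhds 0 one_pos)
      (Set.subset_preimage_image _ _)⟩

end C0CompactExt

open C0CompactExt

set_option maxHeartbeats 1000000 in
set_option synthInstance.maxHeartbeats 1000000 in
/-- Every `c₀`-valued operator defined on a finite-dimensional subspace of a Banach space
admits a compact extension with the same norm: here `c₀ = C₀(ℕ, ℝ)` is the space of real
sequences converging to `0` with the supremum norm. -/
theorem finite_dimensional_c0_compact_extension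
    (X : Type*) [NormedAddCommGroup X] [NormedSpace ℝ X] [CompleteSpace X]
    (F : Submodule ℝ X) [FiniteDimensional ℝ F]
    (t : F →L[ℝ] C₀(ℕ, ℝ)) :
    ∃ T : X →L[ℝ] C₀(ℕ, ℝ), IsCompactOperator T ∧
      (∀ x : F, T x = t x) ∧ ‖T‖ = ‖t‖ := by
  classical
  -- the coordinate functionals of `t`
  set s : ℕ → F →L[ℝ] ℝ := fun n =>
    LinearMap.mkContinuous
      { toFun := fun x => t x n
        map_add' := fun x y => by simp
        map_smul' := fun r x => by simp }
      ‖t‖ (fun x => (normC0_apply_le (t x) n).trans (t.le_opNorm x)) with hs_def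
  have hs_apply : ∀ n (x : F), s n x = t x n := fun n x => rfl
  have hs_le : ∀ n, ‖s n‖ ≤ ‖t‖ := fun n =>
    LinearMap.mkContinuous_norm_le _ (norm_nonneg t) _
  -- the norms of the coordinate functionals tend to 0, by finite-dimensionality
  set d := Module.finrank ℝ F
  set b : Module.Basis (Fin d) ℝ F := Module.finBasis ℝ F with hb_def
  set e : F →L[ℝ] (Fin d → ℝ) := (b.equivFunL : F ≃L[ℝ] (Fin d → ℝ)).toContinuousLinearMap
    with he_def
  have hcoord : ∀ i : Fin d, Tendsto (fun n => ‖s n (b i)‖) atTop (𝓝 0) := by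
    intro i
    have h1 : Tendsto (fun n => t (b i) n) atTop (𝓝 0) := tendsto_apply_c0 (t (b i))
    have h2 := h1.norm; rw [norm_zero] at h2; exact h2
  set c : ℕ → ℝ := fun n => ‖e‖ * ∑ i : Fin d, ‖s n (b i)‖ with hc_def
  have hsc : ∀ n, ‖s n‖ ≤ c n := by
    intro n
    have hc_nonneg : 0 ≤ c n :=
      mul_nonneg (norm_nonneg e) (Finset.sum_nonneg fun i _ => norm_nonneg _)
    refine (s n).opNorm_le_bound hc_nonneg fun x => ?_
    have hx : ∑ i : Fin d, b.equivFun x i • b i = x := b.sum_equivFun x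
    have hsx : s n x = ∑ i : Fin d, b.equivFun x i * s n (b i) := by
      conv_lhs => rw [← hx]
      rw [map_sum]
      simp [smul_eq_mul]
    rw [hsx]
    calc ‖∑ i : Fin d, b.equivFun x i * s n (b i)‖
        ≤ ∑ i : Fin d, ‖b.equivFun x i * s n (b i)‖ := norm_sum_le _ _
      _ ≤ ∑ i : Fin d, (‖e‖ * ‖x‖) * ‖s n (b i)‖ := by
          refine Finset.sum_le_sum fun i _ => ?_
          rw [norm_mul]
          refine mul_le_mul_of_nonneg_right ?_ (norm_nonneg _)
          have h1 : ‖b.equivFun x i‖ ≤ ‖e x‖ := by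
            have : e x = b.equivFun x := rfl
            rw [this]
            exact norm_le_pi_norm (b.equivFun x) i
          exact h1.trans (e.le_opNorm x)
      _ = c n * ‖x‖ := by
          simp only [hc_def]
          rw [Finset.mul_sum, Finset.sum_mul]
          exact Finset.sum_congr rfl fun i _ => by ring
  have hc0 : Tendsto c atTop (𝓝 0) := by
    have hsum : Tendsto (fun n => ∑ i : Fin d, ‖s n (b i)‖) atTop (𝓝 0) := by
      have := tendsto_finset_sum (Finset.univ : Finset (Fin d))
        (fun i _ => hcoord i)
      simpa using this
    have := hsum.const_mul ‖e‖; rw [mul_zero] at this; exact this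
  have hsnorm0 : Tendsto (fun n => ‖s n‖) atTop (𝓝 0) :=
    squeeze_zero (fun n => ContinuousLinearMap.opNorm_nonneg _) hsc hc0
  -- Hahn–Banach extensions of the coordinate functionals
  choose f hf hfnorm using fun n => exists_extension_norm_eq F (s n)
  have hfle : ∀ n, ‖f n‖ ≤ ‖s n‖ := fun n => (hfnorm n).le
  have hsnle : ∀ n, ‖s n‖ ≤ ‖t‖ := hs_le
  -- the extension operator
  set T : X →L[ℝ] C₀(ℕ, ℝ) := opC0 f (fun n => ‖s n‖) hfle hsnorm0 ‖t‖ hsnle with hT_def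
  have hT_apply : ∀ (x : X) (n : ℕ), T x n = f n x := fun x n => rfl
  refine ⟨T, ?_, ?_, ?_⟩
  · -- compactness via finite rank approximation
    set S : ∀ k : ℕ, X →L[ℝ] (Fin k → ℝ) := fun k => ContinuousLinearMap.pi fun i : Fin k => f i
      with hS_def
    set U : ℕ → (X →L[ℝ] C₀(ℕ, ℝ)) := fun k => (inclJ k).comp (S k) with hU_def
    have hUcpt : ∀ k, IsCompactOperator (U k) := by
      intro k
      have hJ : IsCompactOperator (inclJ k) := isCompactOperator_of_finiteDimensional _
      exact hJ.comp_clm (S k)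
    have hUT : Tendsto U atTop (𝓝 T) := by
      refine (Metric.tendsto_atTop (u := U) (a := T)).mpr fun ε hε => ?_
      obtain ⟨N, hN⟩ := (Metric.tendsto_atTop.mp hsnorm0) (ε / 2) (by linarith)
      refine ⟨N, fun k hk => ?_⟩
      have hd : dist (U k) T = ‖U k - T‖ := dist_eq_norm (U k) T
      rw [hd]
      have hle : ‖U k - T‖ ≤ ε / 2 := by
        refine ContinuousLinearMap.opNorm_le_bound _ (by linarith) fun x => ?_
        refine normC0_le _ (mul_nonneg (by linarith) (norm_nonneg x)) fun n => ?_
        have hval : (U k - T) x n = (if h : n < k then f n x else 0) - f n x := rfl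
        rw [hval]
        by_cases h : n < k
        · simp [h]
          positivity
        · simp only [h, dif_neg, not_false_iff, zero_sub, norm_neg]
          have h1 : ‖f n x‖ ≤ ‖s n‖ * ‖x‖ :=
            ((f n).le_opNorm x).trans
              (mul_le_mul_of_nonneg_right (hfle n) (norm_nonneg x))
          have h2 : ‖s n‖ ≤ ε / 2 := by
            have := hN n (le_trans hk (Nat.not_lt.mp h))
            rw [Real.dist_eq, sub_zero] at this
            exact (le_abs_self _).trans this.le
          exact h1.trans (mul_le_mul_of_nonneg_right h2 (norm_nonneg x))
      linarith
    exact isCompactOperator_of_tendsto hUT (Eventually.of_forall hUcpt)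
  · -- extension property
    intro x
    ext n
    rw [hT_apply, hf n x, hs_apply]
  · -- equality of norms
    refine le_antisymm (opC0_norm_le _ _ _ _ _ _) ?_
    refine t.opNorm_le_bound (norm_nonneg T) fun x => ?_
    have h1 : t x = T x := by
      ext n
      rw [hT_apply, hf n x, hs_apply]
    rw [h1]
    calc ‖T (x : X)‖ ≤ ‖T‖ * ‖(x : X)‖ := T.le_opNorm _
      _ = ‖T‖ * ‖x‖ := rfl
end

section
/- A real Banach space U is of almost universal disposition for finite-dimensional spaces if and only if the following approximate extension property holds: for every pair of finite-dimensional real normed spaces A and B, every linear isometric embedding u : A → U, every linear isometric embedding ı : A → B, and every ε > 0, there exists a (1+ε)-isometric embedding u' : B → U such that ‖u(a) − u'(ı(a))‖ ≤ ε‖a‖ for all a ∈ A. -/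
/-- A real Banach space `U` is of almost universal disposition for finite-dimensional spaces
if for all finite-dimensional real normed spaces `A`, `B`, all linear isometric embeddings
`u : A → U` and `j : A → B` and every `ε > 0`, there is a `(1+ε)`-isometric embedding
`u' : B → U` with `u' ∘ j = u`. -/
def AlmostUnivDispFinDim (U : Type*) [NormedAddCommGroup U] [NormedSpace ℝ U] : Prop :=
  ∀ (A B : Type) [NormedAddCommGroup A] [NormedSpace ℝ A] [FiniteDimensional ℝ A]
    [NormedAddCommGroup B] [NormedSpace ℝ B] [FiniteDimensional ℝ B]
    (u : A →ₗᵢ[ℝ] U) (j : A →ₗᵢ[ℝ] B) (ε : ℝ), 0 < ε →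
    ∃ u' : B →ₗ[ℝ] U,
      (∀ b : B, (1 + ε)⁻¹ * ‖b‖ ≤ ‖u' b‖ ∧ ‖u' b‖ ≤ (1 + ε) * ‖b‖) ∧
      ∀ a : A, u' (j a) = u a

/-- A Banach space is of almost universal disposition for finite-dimensional spaces iff it
satisfies the approximate extension property: the extension only has to agree with `u ∘ j⁻¹`
up to `ε`. -/
theorem almostUnivDispFinDim_iff_approx
    (U : Type*) [NormedAddCommGroup U] [NormedSpace ℝ U] [CompleteSpace U] :
    AlmostUnivDispFinDim U ↔
      ∀ (A B : Type) [NormedAddCommGroup A] [NormedSpace ℝ A] [FiniteDimensional ℝ A]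
        [NormedAddCommGroup B] [NormedSpace ℝ B] [FiniteDimensional ℝ B]
        (u : A →ₗᵢ[ℝ] U) (j : A →ₗᵢ[ℝ] B) (ε : ℝ), 0 < ε →
        ∃ u' : B →ₗ[ℝ] U,
          (∀ b : B, (1 + ε)⁻¹ * ‖b‖ ≤ ‖u' b‖ ∧ ‖u' b‖ ≤ (1 + ε) * ‖b‖) ∧
          ∀ a : A, ‖u a - u' (j a)‖ ≤ ε * ‖a‖ := by
  constructor
  · intro h A B _ _ _ _ _ _ u j ε hε
    obtain ⟨u', hb, he⟩ := h A B u j ε hε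
    refine ⟨u', hb, fun a => ?_⟩
    rw [he a, sub_self, norm_zero]
    positivity
  · intro h A B _ _ _ _ _ _ u j ε hε
    obtain ⟨g, hg⟩ := LinearMap.exists_leftInverse_of_injective j.toLinearMap
      (LinearMap.ker_eq_bot.mpr j.injective)
    obtain ⟨lam, hlam, hgb⟩ : ∃ lam ≥ (0:ℝ), ∀ b : B, ‖g b‖ ≤ lam * ‖b‖ :=
      ⟨‖LinearMap.toContinuousLinearMap g‖, norm_nonneg _, fun b => by
        simpa using (LinearMap.toContinuousLinearMap g).le_opNorm b⟩
    obtain ⟨δ, hδ, hkey⟩ : ∃ δ > (0:ℝ), δ * (1 + lam) = ε / (1 + ε) :=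
      ⟨ε / ((1 + ε) * (1 + lam)), by positivity, by field_simp⟩
    obtain ⟨v, hv, hv2⟩ := h A B u j δ hδ
    obtain ⟨w, hwdef⟩ : ∃ w : A →ₗ[ℝ] U, ∀ a : A, w a = u a - v (j a) :=
      ⟨u.toLinearMap - v.comp j.toLinearMap, fun a => rfl⟩
    have hwa : ∀ a : A, ‖w a‖ ≤ δ * ‖a‖ := fun a => by rw [hwdef]; exact hv2 a
    have hwgb : ∀ b : B, ‖w (g b)‖ ≤ δ * lam * ‖b‖ := by
      intro b
      calc ‖w (g b)‖ ≤ δ * ‖g b‖ := hwa (g b)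
        _ ≤ δ * (lam * ‖b‖) := mul_le_mul_of_nonneg_left (hgb b) hδ.le
        _ = δ * lam * ‖b‖ := by ring
    have h1δ : (0:ℝ) < 1 + δ := by linarith
    have h1ε : (0:ℝ) < 1 + ε := by linarith
    have hδinv : (1 + δ) * (1 + δ)⁻¹ = 1 := mul_inv_cancel₀ h1δ.ne'
    have hεsum : (1 + ε)⁻¹ + δ * (1 + lam) = 1 := by
      rw [hkey]; field_simp
    have hsub : 1 - δ ≤ (1 + δ)⁻¹ := by
      nlinarith [sq_nonneg δ, inv_pos.mpr h1δ]
    have hineq : (1 + ε)⁻¹ + δ * lam ≤ (1 + δ)⁻¹ := by nlinarith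
    have hδε' : δ * (1 + lam) ≤ ε := by
      rw [hkey, div_le_iff₀ h1ε]
      nlinarith
    refine ⟨v + w.comp g, fun b => ?_, fun a => ?_⟩
    · have hvb := hv b
      have h1 : ‖(v + w.comp g) b‖ ≤ ‖v b‖ + ‖w (g b)‖ := by
        simpa using norm_add_le (v b) (w (g b))
      have h2 : ‖v b‖ ≤ ‖(v + w.comp g) b‖ + ‖w (g b)‖ := by
        have := norm_sub_le ((v + w.comp g) b) (w (g b))
        simpa using this
      have hb0 : (0:ℝ) ≤ ‖b‖ := norm_nonneg b
      have hwg := hwgb b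
      constructor
      · have hlow : (1 + δ)⁻¹ * ‖b‖ ≤ ‖v b‖ := hvb.1
        have key : (1 + ε)⁻¹ * ‖b‖ + δ * lam * ‖b‖ ≤ (1 + δ)⁻¹ * ‖b‖ := by
          have := mul_le_mul_of_nonneg_right hineq hb0
          calc (1 + ε)⁻¹ * ‖b‖ + δ * lam * ‖b‖ = ((1 + ε)⁻¹ + δ * lam) * ‖b‖ := by ring
            _ ≤ (1 + δ)⁻¹ * ‖b‖ := this
        linarith
      · have hup : ‖v b‖ ≤ (1 + δ) * ‖b‖ := hvb.2
        have key : (1 + δ) * ‖b‖ + δ * lam * ‖b‖ ≤ (1 + ε) * ‖b‖ := by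
          have h3 : δ + δ * lam ≤ ε := by
            have : δ + δ * lam = δ * (1 + lam) := by ring
            linarith
          have := mul_le_mul_of_nonneg_right (by linarith : (1:ℝ) + δ + δ * lam ≤ 1 + ε) hb0
          calc (1 + δ) * ‖b‖ + δ * lam * ‖b‖ = (1 + δ + δ * lam) * ‖b‖ := by ring
            _ ≤ (1 + ε) * ‖b‖ := this
        linarith
    · have hga : g (j a) = a := LinearMap.congr_fun hg a
      simp only [LinearMap.add_apply, LinearMap.comp_apply, hga, hwdef]
      abel
end
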